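/- Let P be a ranked poset with up operator U_x and down operator D_y defined via weight functions ψ, ψ^⊥, and suppose D_y U_x = f(x,y) U_x D_y for a rational function f, and φ is a linear functional with φ ∘ U_x = g(x) · φ ∘ D_x. Then for every λ in P: Σ_ν φ(ν) s_{ν/λ}(x₁,…,xₙ) = ∏_{i=1}^n g(x_i) · ∏_{1 ≤ i < j ≤ n} f(x_i, x_j) · Σ_μ φ(μ) s^⊥_{λ/μ}(x₁,…,xₙ). -/

import Mathlib

noncomputable section

variable {P : Type*} [PartialOrder P] {K : Type*} [Field K]

/-- The degree-`k` piece of the up operator `U_x` determined by the weight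
function `ψ` on a ranked poset: on a finite formal sum `c` it acts linearly by
`λ ↦ Σ_{ν : rk ν = rk λ + k} ψ_{ν/λ} ν`. -/
def uStep (psi : P → P → K) (rk : P → ℕ) (k : ℕ) (c : P →₀ K) : P →₀ K :=
  c.sum fun lam a =>
    a • ∑ᶠ ν ∈ {ν : P | rk ν = rk lam + k}, Finsupp.single ν (psi ν lam)

/-- The degree-`k` piece of the down operator `D_y` determined by the weight
function `ψ^⊥`: `λ ↦ Σ_{μ : rk λ = rk μ + k} ψ^⊥_{λ/μ} μ`. -/
def dStep (psiP : P → P → K) (rk : P → ℕ) (k : ℕ) (c : P →₀ K) : P →₀ K :=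
  c.sum fun lam a =>
    a • ∑ᶠ mu ∈ {mu : P | rk lam = rk mu + k}, Finsupp.single mu (psiP lam mu)

/-- The coefficient at the monomial `d` of the polynomial
`s_{lam/mu}(x₁,…,xₙ) = ⟨U_{xₙ} ⋯ U_{x₁} mu, lam⟩`: a sum over chains
`mu = T 0, T 1, …, T n = lam` whose `i`-th step raises rank by `d i`,
weighted by the product of the `ψ` weights. -/
def sCoeff (psi : P → P → K) (rk : P → ℕ) (n : ℕ) (mu lam : P)
    (d : Fin n →₀ ℕ) : K :=
  ∑ᶠ T ∈ {T : Fin (n + 1) → P | T 0 = mu ∧ T (Fin.last n) = lam ∧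
      ∀ i : Fin n, rk (T i.succ) = rk (T i.castSucc) + d i},
    ∏ i : Fin n, psi (T i.succ) (T i.castSucc)

/-- The coefficient at the monomial `d` of the polynomial
`s^⊥_{lam/mu}(x₁,…,xₙ) = ⟨D_{x₁} ⋯ D_{xₙ} lam, mu⟩` (the operator `D_{xₙ}`
acts first, whence the reversed variable indices). -/
def sPerpCoeff (psiP : P → P → K) (rk : P → ℕ) (n : ℕ) (lam mu : P)
    (d : Fin n →₀ ℕ) : K :=
  ∑ᶠ T ∈ {T : Fin (n + 1) → P | T 0 = lam ∧ T (Fin.last n) = mu ∧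
      ∀ i : Fin n, rk (T i.castSucc) = rk (T i.succ) + d i.rev},
    ∏ i : Fin n, psiP (T i.castSucc) (T i.succ)

/-- The formal power series `g(x_i)` in the variables `x₁,…,xₙ`, obtained by
substituting the variable `i` into a one-variable series with coefficients `G`. -/
def subst1 {n : ℕ} (G : ℕ → K) (i : Fin n) : MvPowerSeries (Fin n) K :=
  fun d => if d.support ⊆ {i} then G (d i) else 0

/-- The formal power series `f(x_i, x_j)`, obtained by substituting the
variables `i` and `j` into a two-variable series with coefficients `F`. -/
def subst2 {n : ℕ} (F : ℕ → ℕ → K) (i j : Fin n) : MvPowerSeries (Fin n) K :=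
  fun d => if d.support ⊆ {i, j} then F (d i) (d j) else 0

/-- The series `Σ_ν φ(ν) s_{ν/lam}(x₁,…,xₙ)`, each coefficient being computed
as a `finsum` over all `ν`. -/
def phiUpSum (psi : P → P → K) (rk : P → ℕ) (phi : (P →₀ K) →ₗ[K] K) (n : ℕ)
    (lam : P) : MvPowerSeries (Fin n) K :=
  fun d => ∑ᶠ ν : P, phi (Finsupp.single ν 1) * sCoeff psi rk n lam ν d

/-- The series `Σ_μ φ(μ) s^⊥_{lam/μ}(x₁,…,xₙ)`. -/
def phiDownSum (psiP : P → P → K) (rk : P → ℕ) (phi : (P →₀ K) →ₗ[K] K) (n : ℕ)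
    (lam : P) : MvPowerSeries (Fin n) K :=
  fun d => ∑ᶠ mu : P, phi (Finsupp.single mu 1) * sPerpCoeff psiP rk n lam mu d

namespace LWAux

open Finset Function Set
open scoped Classical

variable {P : Type*} [PartialOrder P] {K : Type*} [Field K]

/-- Chains of length `k` from `lam` to `nu`. -/
def chainsTo (lam : P) (k : ℕ) (nu : P) : Set (Fin (k + 1) → P) :=
  {T | T 0 = lam ∧ T (Fin.last k) = nu}

/-- Weight of a chain. -/
def cwt (W : ℕ → P → P → K) (k : ℕ) (T : Fin (k + 1) → P) : K :=
  ∏ i : Fin k, W i.val (T i.castSucc) (T i.succ)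

lemma cwt_zero (W : ℕ → P → P → K) (T : Fin 1 → P) : cwt W 0 T = 1 := by
  simp [cwt]

lemma cwt_succ (W : ℕ → P → P → K) (k : ℕ) (T : Fin (k + 2) → P) :
    cwt W (k + 1) T =
      cwt W k (Fin.init T) * W k (Fin.init T (Fin.last k)) (T (Fin.last (k + 1))) := by
  rw [cwt, Fin.prod_univ_castSucc]
  rfl

lemma chains_finite (W : ℕ → P → P → K) (hW : ∀ t a, {b | W t a b ≠ 0}.Finite) (lam : P) :
    ∀ k : ℕ, {T : Fin (k + 1) → P | T 0 = lam ∧ cwt W k T ≠ 0}.Finite := by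
  intro k
  induction k with
  | zero =>
    refine Set.Finite.subset (Set.finite_singleton (fun _ => lam)) ?_
    rintro T ⟨h0, -⟩
    simp only [Set.mem_singleton_iff]
    funext i
    have : i = 0 := by ext; omega
    rw [this, h0]
  | succ k ih =>
    have hbig : (⋃ T' ∈ {T : Fin (k + 1) → P | T 0 = lam ∧ cwt W k T ≠ 0},
        ({T'} : Set (Fin (k + 1) → P)) ×ˢ {b | W k (T' (Fin.last k)) b ≠ 0}).Finite :=
      Set.Finite.biUnion ih fun T' _ =>
        (Set.finite_singleton T').prod (hW k (T' (Fin.last k)))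
    refine Set.Finite.subset ((hbig.image (fun p => Fin.snoc p.1 p.2))) ?_
    rintro T ⟨h0, hw⟩
    refine ⟨(Fin.init T, T (Fin.last (k + 1))), ?_, Fin.snoc_init_self T⟩
    rw [cwt_succ] at hw
    have h1 : cwt W k (Fin.init T) ≠ 0 := left_ne_zero_of_mul hw
    have h2 : W k (Fin.init T (Fin.last k)) (T (Fin.last (k + 1))) ≠ 0 := right_ne_zero_of_mul hw
    refine Set.mem_biUnion (x := Fin.init T) ⟨?_, h1⟩ ?_
    · simpa [Fin.init, Fin.castSucc_zero] using h0
    · exact ⟨rfl, h2⟩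

lemma chainSum_zero (W : ℕ → P → P → K) (lam nu : P) :
    (∑ᶠ T ∈ chainsTo lam 0 nu, cwt W 0 T) = if nu = lam then 1 else 0 := by
  classical
  by_cases h : nu = lam
  · subst h
    have hset : chainsTo nu 0 nu = {fun _ => nu} := by
      ext T
      constructor
      · rintro ⟨h0, -⟩
        funext i
        have : i = 0 := by ext; omega
        rw [this]; exact h0
      · rintro rfl
        exact ⟨rfl, rfl⟩
    rw [hset, finsum_mem_singleton, cwt_zero, if_pos rfl]
  · have hset : chainsTo lam 0 nu = (∅ : Set (Fin 1 → P)) := by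
      ext T
      simp only [chainsTo, Set.mem_setOf_eq, Set.mem_empty_iff_false, iff_false, not_and]
      intro h0
      have hl : Fin.last 0 = (0 : Fin 1) := rfl
      rw [hl, h0]
      exact fun hh => h hh.symm
    rw [hset, finsum_mem_empty, if_neg h]

lemma finsum_mem_mul_const {α : Type*} (s : Set α) (f : α → K) (c : K) :
    (∑ᶠ x ∈ s, f x * c) = (∑ᶠ x ∈ s, f x) * c := by
  classical
  rw [finsum_mem_def, finsum_mem_def]
  have h1 : ∀ x, Set.indicator s (fun x => f x * c) x = Set.indicator s f x * c := by
    intro x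
    by_cases hx : x ∈ s <;> simp [Set.indicator_of_mem, Set.indicator_of_notMem, hx]
  rw [finsum_congr h1]
  simpa [smul_eq_mul] using (finsum_smul (f := fun x => Set.indicator s f x) (x := c)).symm

lemma chainSum_succ (W : ℕ → P → P → K) (hW : ∀ t a, {b | W t a b ≠ 0}.Finite)
    (lam nu : P) (k : ℕ) :
    (∑ᶠ T ∈ chainsTo lam (k + 1) nu, cwt W (k + 1) T)
      = ∑ᶠ nu' : P, (∑ᶠ T' ∈ chainsTo lam k nu', cwt W k T') * W k nu' nu := by
  classical
  set U : Set (Fin (k + 1) → P) := {T' | T' 0 = lam} with hU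
  set g : (Fin (k + 1) → P) → K := fun T' => cwt W k T' * W k (T' (Fin.last k)) nu with hg
  -- Step 1: bijection with `U`
  have step1 : (∑ᶠ T ∈ chainsTo lam (k + 1) nu, cwt W (k + 1) T) = ∑ᶠ T' ∈ U, g T' := by
    refine finsum_mem_eq_of_bijOn Fin.init ⟨?_, ?_, ?_⟩ ?_
    · rintro T ⟨h0, -⟩
      show Fin.init T 0 = lam
      simpa [Fin.init, Fin.castSucc_zero] using h0
    · rintro T₁ ⟨-, hl₁⟩ T₂ ⟨-, hl₂⟩ he
      funext i
      refine Fin.lastCases ?_ ?_ i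
      · rw [hl₁, hl₂]
      · intro j
        have := congrFun he j
        simpa [Fin.init] using this
    · rintro T' hT'
      refine ⟨Fin.snoc T' nu, ⟨?_, ?_⟩, ?_⟩
      · show (Fin.snoc T' nu : Fin (k + 2) → P) 0 = lam
        have h0 : ((0 : Fin (k + 2))) = (0 : Fin (k + 1)).castSucc := by simp
        rw [h0, Fin.snoc_castSucc]
        exact hT'
      · simp
      · simp
    · rintro T ⟨-, hl⟩
      rw [cwt_succ, hg]
      have : Fin.init T (Fin.last k) = T (Fin.last k).castSucc := rfl
      rw [hl]
  -- the finite set of possible endpoints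
  have hCfin := chains_finite W hW lam k
  set Ifin : Set P := (fun T' : Fin (k + 1) → P => T' (Fin.last k)) ''
      {T' | T' 0 = lam ∧ cwt W k T' ≠ 0} with hIfin
  have hIfin_fin : Ifin.Finite := hCfin.image _
  have hsupp : Function.support g ⊆ {T' | cwt W k T' ≠ 0} := by
    intro T' hT'
    simp only [Function.mem_support, hg] at hT'
    exact fun hc => hT' (by rw [hc, zero_mul])
  set t : P → Set (Fin (k + 1) → P) :=
    fun nu' => chainsTo lam k nu' ∩ {T' | cwt W k T' ≠ 0} with ht
  -- Step 2: restrict to the union of fibers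
  have step2 : (∑ᶠ T' ∈ U, g T') = ∑ᶠ T' ∈ ⋃ nu' ∈ Ifin, t nu', g T' := by
    refine finsum_mem_inter_support_eq g _ _ ?_
    ext T'
    simp only [Set.mem_inter_iff, Set.mem_iUnion]
    constructor
    · rintro ⟨hTU, hTs⟩
      have hc : cwt W k T' ≠ 0 := hsupp hTs
      have hT0 : T' 0 = lam := hTU
      refine ⟨⟨T' (Fin.last k), ?_, ?_⟩, hTs⟩
      · exact Set.mem_image_of_mem _ ⟨hT0, hc⟩
      · exact ⟨⟨hT0, rfl⟩, hc⟩
    · rintro ⟨⟨nu', -, ⟨⟨h0, -⟩, -⟩⟩, hTs⟩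
      exact ⟨h0, hTs⟩
  -- Step 3: biUnion
  have step3 : (∑ᶠ T' ∈ ⋃ nu' ∈ Ifin, t nu', g T') = ∑ᶠ nu' ∈ Ifin, ∑ᶠ T' ∈ t nu', g T' := by
    refine finsum_mem_biUnion ?_ hIfin_fin ?_
    · intro a _ b _ hab
      refine Set.disjoint_left.2 ?_
      rintro T' ⟨⟨-, hla⟩, -⟩ ⟨⟨-, hlb⟩, -⟩
      exact hab (hla ▸ hlb ▸ rfl)
    · intro nu' _
      exact hCfin.subset (by rintro T' ⟨⟨h0, -⟩, hc⟩; exact ⟨h0, hc⟩)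
  -- Step 4: each fiber
  have step4 : ∀ nu', (∑ᶠ T' ∈ t nu', g T')
      = (∑ᶠ T' ∈ chainsTo lam k nu', cwt W k T') * W k nu' nu := by
    intro nu'
    have h1 : (∑ᶠ T' ∈ t nu', g T') = ∑ᶠ T' ∈ chainsTo lam k nu', g T' := by
      refine finsum_mem_inter_support_eq g _ _ ?_
      ext T'
      simp only [Set.mem_inter_iff, ht]
      constructor
      · rintro ⟨⟨hc, -⟩, hs⟩
        exact ⟨hc, hs⟩
      · rintro ⟨hc, hs⟩
        exact ⟨⟨hc, hsupp hs⟩, hs⟩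
    have h2 : (∑ᶠ T' ∈ chainsTo lam k nu', g T')
        = ∑ᶠ T' ∈ chainsTo lam k nu', cwt W k T' * W k nu' nu := by
      refine finsum_mem_congr rfl fun T' hT' => ?_
      rcases hT' with ⟨-, hl⟩
      show cwt W k T' * W k (T' (Fin.last k)) nu = _
      rw [hl]
    rw [h1, h2, finsum_mem_mul_const]
  -- Step 5: extend to a full finsum
  have step5 : (∑ᶠ nu' ∈ Ifin, (∑ᶠ T' ∈ chainsTo lam k nu', cwt W k T') * W k nu' nu)
      = ∑ᶠ nu' : P, (∑ᶠ T' ∈ chainsTo lam k nu', cwt W k T') * W k nu' nu := by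
    rw [← finsum_mem_univ
      (f := fun nu' => (∑ᶠ T' ∈ chainsTo lam k nu', cwt W k T') * W k nu' nu)]
    refine finsum_mem_inter_support_eq _ _ _ ?_
    ext nu'
    simp only [Set.mem_inter_iff, Set.mem_univ, true_and, and_iff_right_iff_imp,
      Function.mem_support]
    intro hs
    by_contra hni
    have hempty : chainsTo lam k nu' ∩ Function.support (cwt W k) = ∅ := by
      ext T'
      simp only [Set.mem_inter_iff, Set.mem_empty_iff_false, iff_false, not_and,
        Function.mem_support]
      rintro ⟨h0, hl⟩ hc
      exact hni ⟨T', ⟨h0, hc⟩, hl⟩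
    have hz : (∑ᶠ T' ∈ chainsTo lam k nu', cwt W k T') = 0 := by
      rw [← finsum_mem_inter_support, hempty, finsum_mem_empty]
    exact hs (by rw [hz, zero_mul])
  rw [step1, step2, step3, finsum_mem_congr rfl fun nu' _ => step4 nu', step5]

end LWAux

section StepLemmas

open scoped Classical

set_option linter.unusedSectionVars false

variable {P : Type*} [PartialOrder P] {K : Type*} [Field K]

/-- Evaluation of a finsum of singles. -/
lemma finsum_single_eval (S : Set P) (w : P → K)
    (h : (S ∩ Function.support w).Finite) (nu : P) :
    (∑ᶠ mu ∈ S, Finsupp.single mu (w mu)) nu = if nu ∈ S then w nu else 0 := by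
  classical
  have hsub : S ∩ Function.support (fun mu => Finsupp.single mu (w mu)) ⊆
      S ∩ Function.support w := by
    rintro mu ⟨hm, hs⟩
    refine ⟨hm, ?_⟩
    simp only [Function.mem_support] at hs ⊢
    exact fun hw => hs (by rw [hw, Finsupp.single_zero])
  have hfin := h.subset hsub
  rw [finsum_mem_eq_sum _ hfin]
  rw [Finsupp.finset_sum_apply]
  have : ∀ mu ∈ hfin.toFinset, (Finsupp.single mu (w mu)) nu
      = if mu = nu then w mu else 0 := by
    intro mu _
    exact Finsupp.single_apply
  rw [Finset.sum_congr rfl this, Finset.sum_ite_eq' hfin.toFinset nu w]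
  have hmem : nu ∈ hfin.toFinset ↔ nu ∈ S ∧ w nu ≠ 0 := by
    simp [Set.Finite.mem_toFinset, Function.mem_support]
  by_cases hS : nu ∈ S
  · by_cases hw : w nu = 0
    · simp [hmem, hS, hw]
    · simp [hmem, hS, hw]
  · simp [hmem, hS]

lemma uStep_apply (psi : P → P → K) (rk : P → ℕ)
    (hfinU : ∀ (lam : P) (k : ℕ), {ν : P | psi ν lam ≠ 0 ∧ rk ν = rk lam + k}.Finite)
    (t : ℕ) (c : P →₀ K) (nu : P) :
    uStep psi rk t c nu
      = ∑ a ∈ c.support, c a * (if rk nu = rk a + t then psi nu a else 0) := by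
  classical
  rw [uStep, Finsupp.sum, Finsupp.finset_sum_apply]
  refine Finset.sum_congr rfl fun a _ => ?_
  rw [Finsupp.smul_apply, smul_eq_mul]
  congr 1
  have hfin : ({ν : P | rk ν = rk a + t} ∩ Function.support (fun ν => psi ν a)).Finite := by
    refine (hfinU a t).subset ?_
    rintro ν ⟨h1, h2⟩
    exact ⟨h2, h1⟩
  rw [finsum_single_eval _ _ hfin nu]
  simp only [Set.mem_setOf_eq]

lemma dStep_apply (psiP : P → P → K) (rk : P → ℕ)
    (hfinD : ∀ (lam : P) (k : ℕ), {mu : P | psiP lam mu ≠ 0 ∧ rk lam = rk mu + k}.Finite)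
    (t : ℕ) (c : P →₀ K) (nu : P) :
    dStep psiP rk t c nu
      = ∑ a ∈ c.support, c a * (if rk a = rk nu + t then psiP a nu else 0) := by
  classical
  rw [dStep, Finsupp.sum, Finsupp.finset_sum_apply]
  refine Finset.sum_congr rfl fun a _ => ?_
  rw [Finsupp.smul_apply, smul_eq_mul]
  congr 1
  have hfin : ({mu : P | rk a = rk mu + t} ∩ Function.support (fun mu => psiP a mu)).Finite := by
    refine (hfinD a t).subset ?_
    rintro mu ⟨h1, h2⟩
    exact ⟨h2, h1⟩
  rw [finsum_single_eval _ _ hfin nu]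
  simp only [Set.mem_setOf_eq]

/-- Iterating a family of step maps. -/
def iterStep (step : ℕ → (P →₀ K) → (P →₀ K)) (c : P →₀ K) : ℕ → (P →₀ K)
  | 0 => c
  | (k + 1) => step k (iterStep step c k)

lemma iterStep_congr (step₁ step₂ : ℕ → (P →₀ K) → (P →₀ K)) (c : P →₀ K) (k : ℕ)
    (h : ∀ t < k, step₁ t = step₂ t) : iterStep step₁ c k = iterStep step₂ c k := by
  induction k with
  | zero => rfl
  | succ k ih =>
    rw [iterStep, iterStep, ih (fun t ht => h t (Nat.lt_succ_of_lt ht)),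
      h k (Nat.lt_succ_self k)]

lemma iterStep_eq_chainSum (W : ℕ → P → P → K)
    (hW : ∀ t a, {b | W t a b ≠ 0}.Finite)
    (step : ℕ → (P →₀ K) → (P →₀ K))
    (hstep : ∀ t (c : P →₀ K) b, step t c b = ∑ a ∈ c.support, c a * W t a b)
    (lam : P) (k : ℕ) (nu : P) :
    iterStep step (Finsupp.single lam 1) k nu
      = ∑ᶠ T ∈ LWAux.chainsTo lam k nu, LWAux.cwt W k T := by
  classical
  induction k generalizing nu with
  | zero =>
    rw [LWAux.chainSum_zero, iterStep]
    rw [Finsupp.single_apply]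
    by_cases h : lam = nu
    · simp [h]
    · simp [h, Ne.symm h]
  | succ k ih =>
    rw [LWAux.chainSum_succ W hW, iterStep, hstep]
    set c := iterStep step (Finsupp.single lam 1) k with hc
    have hss : Function.support (fun a => c a * W k a nu) ⊆ (c.support : Set P) := by
      intro a ha
      simp only [Function.mem_support] at ha
      simp only [Finset.mem_coe, Finsupp.mem_support_iff]
      exact fun h0 => ha (by rw [h0, zero_mul])
    rw [← finsum_eq_finset_sum_of_support_subset _ hss]
    exact (finsum_congr fun a => by rw [ih a]).symm

/-- `phi` of a finitely supported function, written as a `finsum`. -/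
lemma phi_apply_finsum (phi : (P →₀ K) →ₗ[K] K) (c : P →₀ K) :
    phi c = ∑ᶠ nu : P, phi (Finsupp.single nu 1) * c nu := by
  classical
  have hss : Function.support (fun nu => phi (Finsupp.single nu 1) * c nu)
      ⊆ (c.support : Set P) := by
    intro a ha
    simp only [Function.mem_support] at ha
    simp only [Finset.mem_coe, Finsupp.mem_support_iff]
    exact fun h0 => ha (by rw [h0, mul_zero])
  rw [finsum_eq_finset_sum_of_support_subset _ hss]
  conv_lhs => rw [← Finsupp.sum_single c]
  rw [Finsupp.sum, map_sum]
  refine Finset.sum_congr rfl fun a _ => ?_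
  have : Finsupp.single a (c a) = c a • Finsupp.single a (1 : K) := by
    rw [Finsupp.smul_single, smul_eq_mul, mul_one]
  rw [this, map_smul, smul_eq_mul, mul_comm]

end StepLemmas


section PSLayer

open Finset

open scoped Classical

set_option linter.unusedSectionVars false

variable {P : Type*} [PartialOrder P] {K : Type*} [Field K]

theorem coeff_eq_apply {n : ℕ} (f : MvPowerSeries (Fin n) K) (d : Fin n →₀ ℕ) :
    MvPowerSeries.coeff d f = f d := rfl

lemma uStep_eq_lc (psi : P → P → K) (rk : P → ℕ) (k : ℕ) :
    uStep psi rk k = ⇑(Finsupp.linearCombination K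
      (fun lam => ∑ᶠ ν ∈ {ν : P | rk ν = rk lam + k}, Finsupp.single ν (psi ν lam))) := by
  funext c
  rw [Finsupp.linearCombination_apply, uStep]

lemma dStep_eq_lc (psiP : P → P → K) (rk : P → ℕ) (k : ℕ) :
    dStep psiP rk k = ⇑(Finsupp.linearCombination K
      (fun lam => ∑ᶠ mu ∈ {mu : P | rk lam = rk mu + k}, Finsupp.single mu (psiP lam mu))) := by
  funext c
  rw [Finsupp.linearCombination_apply, dStep]

lemma uStep_smul (psi : P → P → K) (rk : P → ℕ) (k : ℕ) (a : K) (c : P →₀ K) :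
    uStep psi rk k (a • c) = a • uStep psi rk k c := by
  rw [uStep_eq_lc]; exact map_smul _ a c

lemma uStep_sum {α : Type*} (psi : P → P → K) (rk : P → ℕ) (k : ℕ) (s : Finset α)
    (f : α → (P →₀ K)) :
    uStep psi rk k (∑ x ∈ s, f x) = ∑ x ∈ s, uStep psi rk k (f x) := by
  rw [uStep_eq_lc]; exact map_sum _ f s

lemma uStep_zero (psi : P → P → K) (rk : P → ℕ) (k : ℕ) :
    uStep psi rk k (0 : P →₀ K) = 0 := by
  rw [uStep_eq_lc]; exact map_zero _

lemma dStep_smul (psiP : P → P → K) (rk : P → ℕ) (k : ℕ) (a : K) (c : P →₀ K) :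
    dStep psiP rk k (a • c) = a • dStep psiP rk k c := by
  rw [dStep_eq_lc]; exact map_smul _ a c

lemma dStep_sum {α : Type*} (psiP : P → P → K) (rk : P → ℕ) (k : ℕ) (s : Finset α)
    (f : α → (P →₀ K)) :
    dStep psiP rk k (∑ x ∈ s, f x) = ∑ x ∈ s, dStep psiP rk k (f x) := by
  rw [dStep_eq_lc]; exact map_sum _ f s

lemma dStep_zero (psiP : P → P → K) (rk : P → ℕ) (k : ℕ) :
    dStep psiP rk k (0 : P →₀ K) = 0 := by
  rw [dStep_eq_lc]; exact map_zero _

lemma sum_range_triangle {β : Type*} [AddCommMonoid β] (N : ℕ) (h : ℕ → ℕ → β) :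
    ∑ k ∈ range (N + 1), ∑ a ∈ range (k + 1), h a (k - a)
      = ∑ a ∈ range (N + 1), ∑ b ∈ range (N - a + 1), h a b := by
  rw [Finset.sum_sigma', Finset.sum_sigma']
  refine Finset.sum_nbij' (fun p => ⟨p.2, p.1 - p.2⟩) (fun p => ⟨p.1 + p.2, p.1⟩) ?_ ?_ ?_ ?_ ?_
  · rintro ⟨k, a⟩ hp
    simp only [Finset.mem_sigma, Finset.mem_range] at hp ⊢
    omega
  · rintro ⟨a, b⟩ hp
    simp only [Finset.mem_sigma, Finset.mem_range] at hp ⊢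
    omega
  · rintro ⟨k, a⟩ hp
    simp only [Finset.mem_sigma, Finset.mem_range] at hp
    simp only [Sigma.mk.inj_iff, heq_eq_eq, and_true, true_and]
    omega
  · rintro ⟨a, b⟩ hp
    simp only [Finset.mem_sigma, Finset.mem_range] at hp
    simp only [Sigma.mk.inj_iff, heq_eq_eq, and_true, true_and]
    omega
  · rintro ⟨k, a⟩ _
    rfl

variable {n : ℕ}

/-- The linear functional applied coefficientwise. -/
def PhiM (phi : (P →₀ K) →ₗ[K] K) (m : (Fin n →₀ ℕ) → (P →₀ K)) :
    MvPowerSeries (Fin n) K :=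
  fun d => phi (m d)

/-- The up series operator in variable `i`. -/
def Ux (psi : P → P → K) (rk : P → ℕ) (i : Fin n)
    (m : (Fin n →₀ ℕ) → (P →₀ K)) : (Fin n →₀ ℕ) → (P →₀ K) :=
  fun d => ∑ k ∈ range (d i + 1), uStep psi rk k (m (d - Finsupp.single i k))

/-- The down series operator in variable `i`. -/
def Dx (psiP : P → P → K) (rk : P → ℕ) (i : Fin n)
    (m : (Fin n →₀ ℕ) → (P →₀ K)) : (Fin n →₀ ℕ) → (P →₀ K) :=
  fun d => ∑ k ∈ range (d i + 1), dStep psiP rk k (m (d - Finsupp.single i k))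

/-- Multiplication of a `Finsupp`-valued series by a scalar series. -/
def mulS (r : MvPowerSeries (Fin n) K) (m : (Fin n →₀ ℕ) → (P →₀ K)) :
    (Fin n →₀ ℕ) → (P →₀ K) :=
  fun d => ∑ p ∈ Finset.HasAntidiagonal.antidiagonal d, r p.1 • m p.2

/-- delta series at `lam`. -/
def deltaM (lam : P) : (Fin n →₀ ℕ) → (P →₀ K) :=
  fun d => if d = 0 then Finsupp.single lam 1 else 0

lemma PhiM_mulS (phi : (P →₀ K) →ₗ[K] K) (r : MvPowerSeries (Fin n) K)
    (m : (Fin n →₀ ℕ) → (P →₀ K)) :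
    PhiM phi (mulS r m) = r * PhiM phi m := by
  funext d
  show phi (∑ p ∈ Finset.HasAntidiagonal.antidiagonal d, r p.1 • m p.2) = _
  rw [map_sum]
  have : (r * PhiM phi m) d = ∑ p ∈ Finset.HasAntidiagonal.antidiagonal d, r p.1 * phi (m p.2) :=
    MvPowerSeries.coeff_mul d r (PhiM phi m)
  rw [this]
  refine Finset.sum_congr rfl fun p _ => ?_
  rw [map_smul, smul_eq_mul]

lemma mulS_one (m : (Fin n →₀ ℕ) → (P →₀ K)) : mulS 1 m = m := by
  funext d
  rw [mulS]
  rw [Finset.sum_eq_single_of_mem ((0 : Fin n →₀ ℕ), d) (by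
    rw [Finset.HasAntidiagonal.mem_antidiagonal, zero_add])]
  · have h1 : (1 : MvPowerSeries (Fin n) K) 0 = 1 := by
      exact MvPowerSeries.coeff_zero_one (σ := Fin n) (R := K)
    rw [h1, one_smul]
  · rintro ⟨p1, p2⟩ hp hne
    rw [Finset.HasAntidiagonal.mem_antidiagonal] at hp
    have hp1 : p1 ≠ 0 := by
      rintro rfl
      rw [zero_add] at hp
      exact hne (by cases hp; rfl)
    have : (1 : MvPowerSeries (Fin n) K) p1 = 0 := by
      have := MvPowerSeries.coeff_one (σ := Fin n) (R := K) p1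
      rw [if_neg hp1] at this
      exact this
    rw [this, zero_smul]

lemma mulS_mulS (r s : MvPowerSeries (Fin n) K) (m : (Fin n →₀ ℕ) → (P →₀ K)) :
    mulS r (mulS s m) = mulS (r * s) m := by
  funext d
  show (∑ p ∈ Finset.HasAntidiagonal.antidiagonal d, r p.1 • ∑ q ∈ Finset.HasAntidiagonal.antidiagonal p.2, s q.1 • m q.2)
    = ∑ p ∈ Finset.HasAntidiagonal.antidiagonal d, (r * s) p.1 • m p.2
  have hrs : ∀ p : (Fin n →₀ ℕ) × (Fin n →₀ ℕ), (r * s) p.1 • m p.2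
      = ∑ q ∈ Finset.HasAntidiagonal.antidiagonal p.1, (r q.1 * s q.2) • m p.2 := by
    intro p
    have h0 : (r * s) p.1 = ∑ q ∈ Finset.HasAntidiagonal.antidiagonal p.1, r q.1 * s q.2 :=
      MvPowerSeries.coeff_mul p.1 r s
    rw [h0, Finset.sum_smul]
  simp only [Finset.smul_sum, smul_smul, hrs]
  rw [Finset.sum_sigma', Finset.sum_sigma']
  apply Finset.sum_nbij' (fun x => ⟨(x.1.1 + x.2.1, x.2.2), (x.1.1, x.2.1)⟩)
    (fun x => ⟨(x.2.1, x.2.2 + x.1.2), (x.2.2, x.1.2)⟩) <;>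
    aesop (add simp [add_assoc])


lemma finsupp_eq_single_add_single {i j : Fin n} (hij : i ≠ j) (q : Fin n →₀ ℕ)
    (h : q.support ⊆ {i, j}) :
    q = Finsupp.single i (q i) + Finsupp.single j (q j) := by
  ext a
  rw [Finsupp.add_apply]
  by_cases hai : a = i
  · subst hai
    rw [Finsupp.single_eq_same, Finsupp.single_eq_of_ne' (Ne.symm (by simpa using hij)), add_zero]
  · by_cases haj : a = j
    · subst haj
      rw [Finsupp.single_eq_same, Finsupp.single_eq_of_ne' (by simpa using hij), zero_add]
    · rw [Finsupp.single_eq_of_ne' (Ne.symm hai), Finsupp.single_eq_of_ne' (Ne.symm haj), add_zero]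
      by_contra hq
      have : a ∈ q.support := Finsupp.mem_support_iff.2 (Ne.symm (by simpa using fun h => hq h.symm))
      have := h this
      simp only [Finset.mem_insert, Finset.mem_singleton] at this
      tauto

lemma subst1_mul_apply (G : ℕ → K) (i : Fin n) (S : MvPowerSeries (Fin n) K)
    (d : Fin n →₀ ℕ) :
    (subst1 G i * S) d = ∑ k ∈ range (d i + 1), G k * S (d - Finsupp.single i k) := by
  have hmul : (subst1 G i * S) d
      = ∑ p ∈ Finset.HasAntidiagonal.antidiagonal d, subst1 G i p.1 * S p.2 :=
    MvPowerSeries.coeff_mul d (subst1 G i) S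
  rw [hmul]
  set sub : Finset ((Fin n →₀ ℕ) × (Fin n →₀ ℕ)) :=
    (range (d i + 1)).image (fun k => (Finsupp.single i k, d - Finsupp.single i k)) with hsubdef
  have hsub : sub ⊆ Finset.HasAntidiagonal.antidiagonal d := by
    intro p hp
    simp only [hsubdef, Finset.mem_image, Finset.mem_range] at hp
    obtain ⟨k, hk, rfl⟩ := hp
    rw [Finset.HasAntidiagonal.mem_antidiagonal]
    exact add_tsub_cancel_of_le (Finsupp.single_le_iff.2 (by omega))
  have hvan : ∀ p ∈ Finset.HasAntidiagonal.antidiagonal d, p ∉ sub → subst1 G i p.1 * S p.2 = 0 := by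
    rintro ⟨p1, p2⟩ hp hns
    rw [Finset.HasAntidiagonal.mem_antidiagonal] at hp
    by_cases hs : p1.support ⊆ {i}
    · exfalso
      apply hns
      have hp1 : p1 = Finsupp.single i (p1 i) := Finsupp.support_subset_singleton.1 hs
      have hle : p1 i ≤ d i := by
        have : (p1 + p2) i = d i := by rw [hp]
        rw [Finsupp.add_apply] at this
        omega
      have hp2 : p2 = d - Finsupp.single i (p1 i) := by
        rw [← hp1]
        exact eq_tsub_of_add_eq (by rw [add_comm, hp])
      simp only [hsubdef, Finset.mem_image, Finset.mem_range]
      exact ⟨p1 i, by omega, by rw [hp2, ← hp1]⟩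
    · have : subst1 G i p1 = 0 := by
        rw [subst1, if_neg hs]
      rw [this, zero_mul]
  rw [← Finset.sum_subset hsub hvan, hsubdef, Finset.sum_image ?hinj]
  case hinj =>
    intro a _ b _ hab
    have := congrArg (fun p => p.1 i) hab
    simpa [Finsupp.single_eq_same] using this
  refine Finset.sum_congr rfl fun k _ => ?_
  congr 1
  rw [subst1, if_pos (Finsupp.support_single_subset), Finsupp.single_eq_same]

lemma mulS_subst2_apply (F : ℕ → ℕ → K) {i j : Fin n} (hij : i ≠ j)
    (m : (Fin n →₀ ℕ) → (P →₀ K)) (d : Fin n →₀ ℕ) :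
    mulS (subst2 F i j) m d
      = ∑ a ∈ range (d i + 1), ∑ b ∈ range (d j + 1),
          F a b • m (d - Finsupp.single i a - Finsupp.single j b) := by
  rw [mulS]
  set sub : Finset ((Fin n →₀ ℕ) × (Fin n →₀ ℕ)) :=
    ((range (d i + 1)) ×ˢ (range (d j + 1))).image
      (fun ab => (Finsupp.single i ab.1 + Finsupp.single j ab.2,
        d - Finsupp.single i ab.1 - Finsupp.single j ab.2)) with hsubdef
  have keyval : ∀ a b : ℕ, (Finsupp.single i a + Finsupp.single j b : Fin n →₀ ℕ) i = a ∧
      (Finsupp.single i a + Finsupp.single j b : Fin n →₀ ℕ) j = b := by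
    intro a b
    constructor
    · rw [Finsupp.add_apply, Finsupp.single_eq_same,
        Finsupp.single_eq_of_ne' (Ne.symm hij), add_zero]
    · rw [Finsupp.add_apply, Finsupp.single_eq_same, Finsupp.single_eq_of_ne' hij, zero_add]
  have hsub : sub ⊆ Finset.HasAntidiagonal.antidiagonal d := by
    intro p hp
    simp only [hsubdef, Finset.mem_image, Finset.mem_product, Finset.mem_range] at hp
    obtain ⟨⟨a, b⟩, ⟨ha, hb⟩, rfl⟩ := hp
    rw [Finset.HasAntidiagonal.mem_antidiagonal]
    have h1 : (Finsupp.single j b : Fin n →₀ ℕ) ≤ d - Finsupp.single i a := by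
      rw [Finsupp.single_le_iff, Finsupp.tsub_apply, Finsupp.single_eq_of_ne' hij]
      omega
    have h2 : (Finsupp.single i a : Fin n →₀ ℕ) ≤ d := Finsupp.single_le_iff.2 (by omega)
    calc Finsupp.single i a + Finsupp.single j b
        + (d - Finsupp.single i a - Finsupp.single j b)
        = Finsupp.single i a + (Finsupp.single j b
          + (d - Finsupp.single i a - Finsupp.single j b)) := by rw [add_assoc]
      _ = Finsupp.single i a + (d - Finsupp.single i a) := by rw [add_tsub_cancel_of_le h1]
      _ = d := add_tsub_cancel_of_le h2
  have hvan : ∀ p ∈ Finset.HasAntidiagonal.antidiagonal d, p ∉ sub → subst2 F i j p.1 • m p.2 = 0 := by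
    rintro ⟨p1, p2⟩ hp hns
    rw [Finset.HasAntidiagonal.mem_antidiagonal] at hp
    by_cases hs : p1.support ⊆ {i, j}
    · exfalso
      apply hns
      have hp1 : p1 = Finsupp.single i (p1 i) + Finsupp.single j (p1 j) :=
        finsupp_eq_single_add_single hij p1 hs
      have hlei : p1 i ≤ d i := by
        have : (p1 + p2) i = d i := by rw [hp]
        rw [Finsupp.add_apply] at this; omega
      have hlej : p1 j ≤ d j := by
        have : (p1 + p2) j = d j := by rw [hp]
        rw [Finsupp.add_apply] at this; omega
      have hp2 : p2 = d - Finsupp.single i (p1 i) - Finsupp.single j (p1 j) := by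
        rw [tsub_tsub, ← hp1]
        exact eq_tsub_of_add_eq (by rw [add_comm, hp])
      simp only [hsubdef, Finset.mem_image, Finset.mem_product, Finset.mem_range]
      exact ⟨(p1 i, p1 j), ⟨by omega, by omega⟩, by rw [hp2, ← hp1]⟩
    · have : subst2 F i j p1 = 0 := by
        rw [subst2, if_neg hs]
      rw [this, zero_smul]
  rw [← Finset.sum_subset hsub hvan, hsubdef, Finset.sum_image ?hinj, Finset.sum_product]
  case hinj =>
    rintro ⟨a, b⟩ _ ⟨a', b'⟩ _ hab
    have h1 := congrArg (fun p => p.1 i) hab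
    have h2 := congrArg (fun p => p.1 j) hab
    simp only at h1 h2
    rw [(keyval a b).1, (keyval a' b').1] at h1
    rw [(keyval a b).2, (keyval a' b').2] at h2
    rw [Prod.mk.injEq]
    exact ⟨h1, h2⟩
  refine Finset.sum_congr rfl fun a _ => Finset.sum_congr rfl fun b _ => ?_
  congr 1
  rw [subst2]
  have hss : (Finsupp.single i a + Finsupp.single j b : Fin n →₀ ℕ).support ⊆ {i, j} := by
    refine Finsupp.support_add.trans ?_
    intro x hx
    simp only [Finset.mem_union] at hx
    rcases hx with hx | hx
    · exact Finset.mem_insert.2 (Or.inl (by simpa using Finsupp.support_single_subset hx))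
    · have := Finsupp.support_single_subset hx
      simp only [Finset.mem_singleton] at this
      exact Finset.mem_insert.2 (Or.inr (by simpa using this))
  rw [if_pos hss, (keyval a b).1, (keyval a b).2]


lemma quad_comm {β : Type*} [AddCommMonoid β] (N M : ℕ) (g : ℕ → ℕ → ℕ → ℕ → β) :
    (∑ b ∈ range (M + 1), ∑ e ∈ range (M - b + 1), ∑ a ∈ range (N + 1),
      ∑ c ∈ range (N - a + 1), g a b c e)
    = ∑ a ∈ range (N + 1), ∑ b ∈ range (M + 1), ∑ c ∈ range (N - a + 1),
      ∑ e ∈ range (M - b + 1), g a b c e := by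
  have h1 : ∀ b, (∑ e ∈ range (M - b + 1), ∑ a ∈ range (N + 1),
      ∑ c ∈ range (N - a + 1), g a b c e)
      = ∑ a ∈ range (N + 1), ∑ c ∈ range (N - a + 1),
        ∑ e ∈ range (M - b + 1), g a b c e := by
    intro b
    rw [Finset.sum_comm]
    refine Finset.sum_congr rfl fun a _ => Finset.sum_comm
  rw [Finset.sum_congr rfl fun b _ => h1 b, Finset.sum_comm]

lemma sub_single_split (i : Fin n) (d : Fin n →₀ ℕ) (a c : ℕ) :
    d - Finsupp.single i (a + c) = d - Finsupp.single i a - Finsupp.single i c := by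
  ext x
  simp only [Finsupp.tsub_apply, Finsupp.single_apply]
  split_ifs <;> omega

lemma Ux_mulS (psi : P → P → K) (rk : P → ℕ) (i : Fin n) (r : MvPowerSeries (Fin n) K)
    (m : (Fin n →₀ ℕ) → (P →₀ K)) :
    Ux psi rk i (mulS r m) = mulS r (Ux psi rk i m) := by
  funext d
  have hL : Ux psi rk i (mulS r m) d
      = ∑ k ∈ range (d i + 1), ∑ p ∈ Finset.HasAntidiagonal.antidiagonal (d - Finsupp.single i k),
          r p.1 • uStep psi rk k (m p.2) := by
    rw [Ux]
    refine Finset.sum_congr rfl fun k _ => ?_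
    rw [mulS, uStep_sum]
    refine Finset.sum_congr rfl fun p _ => ?_
    rw [uStep_smul]
  have hR : mulS r (Ux psi rk i m) d
      = ∑ p ∈ Finset.HasAntidiagonal.antidiagonal d, ∑ k ∈ range (p.2 i + 1),
          r p.1 • uStep psi rk k (m (p.2 - Finsupp.single i k)) := by
    rw [mulS]
    refine Finset.sum_congr rfl fun p _ => ?_
    rw [Ux, Finset.smul_sum]
  rw [hL, hR, Finset.sum_sigma', Finset.sum_sigma']
  refine Finset.sum_nbij' (fun x => ⟨(x.2.1, x.2.2 + Finsupp.single i x.1), x.1⟩)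
    (fun x => ⟨x.2, (x.1.1, x.1.2 - Finsupp.single i x.2)⟩) ?_ ?_ ?_ ?_ ?_
  · rintro ⟨k, p1, p2⟩ hp
    simp only [Finset.mem_sigma, Finset.mem_range, Finset.HasAntidiagonal.mem_antidiagonal] at hp ⊢
    obtain ⟨hk, hp⟩ := hp
    constructor
    · rw [← add_assoc, hp]
      exact tsub_add_cancel_of_le (Finsupp.single_le_iff.2 (by omega))
    · rw [Finsupp.add_apply, Finsupp.single_eq_same]
      omega
  · rintro ⟨⟨q1, q2⟩, k⟩ hp
    simp only [Finset.mem_sigma, Finset.mem_range, Finset.HasAntidiagonal.mem_antidiagonal] at hp ⊢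
    obtain ⟨hq, hk⟩ := hp
    have hkd : k ≤ d i := by
      have : (q1 + q2) i = d i := by rw [hq]
      rw [Finsupp.add_apply] at this
      omega
    refine ⟨by omega, ?_⟩
    rw [← hq, add_tsub_assoc_of_le (Finsupp.single_le_iff.2 (by omega))]
  · rintro ⟨k, p1, p2⟩ hp
    simp only [Finset.mem_sigma, Finset.mem_range, Finset.HasAntidiagonal.mem_antidiagonal] at hp
    simp only [Sigma.mk.inj_iff, heq_eq_eq, Prod.mk.injEq, true_and]
    simp
  · rintro ⟨⟨q1, q2⟩, k⟩ hp
    simp only [Finset.mem_sigma, Finset.mem_range, Finset.HasAntidiagonal.mem_antidiagonal] at hp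
    obtain ⟨hq, hk⟩ := hp
    simp only [Sigma.mk.inj_iff, heq_eq_eq, Prod.mk.injEq, true_and]
    exact ⟨tsub_add_cancel_of_le (Finsupp.single_le_iff.2 (by omega)), trivial⟩
  · rintro ⟨k, p1, p2⟩ _
    dsimp only
    rw [add_tsub_cancel_right]

lemma PhiM_Ux (psi psiP : P → P → K) (rk : P → ℕ) (G : ℕ → K)
    (phi : (P →₀ K) →ₗ[K] K)
    (hproj : ∀ (k : ℕ) (c : P →₀ K),
      phi (uStep psi rk k c) =
        ∑ t ∈ Finset.range (k + 1), G t * phi (dStep psiP rk (k - t) c))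
    (i : Fin n) (m : (Fin n →₀ ℕ) → (P →₀ K)) :
    PhiM phi (Ux psi rk i m) = subst1 G i * PhiM phi (Dx psiP rk i m) := by
  funext d
  have hL : PhiM phi (Ux psi rk i m) d
      = ∑ k ∈ range (d i + 1), ∑ t ∈ range (k + 1),
          (fun t l => G t * phi (dStep psiP rk l
            (m (d - Finsupp.single i t - Finsupp.single i l)))) t (k - t) := by
    show phi (Ux psi rk i m d) = _
    rw [Ux, map_sum]
    refine Finset.sum_congr rfl fun k hk => ?_
    rw [hproj]
    refine Finset.sum_congr rfl fun t ht => ?_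
    simp only [Finset.mem_range] at hk ht
    have : d - Finsupp.single i k
        = d - Finsupp.single i t - Finsupp.single i (k - t) := by
      rw [← sub_single_split]
      congr 1
      congr 1
      omega
    rw [this]
  have htri := sum_range_triangle (d i) (fun t l => G t * phi (dStep psiP rk l
      (m (d - Finsupp.single i t - Finsupp.single i l))))
  beta_reduce at htri
  rw [hL] at *
  rw [htri, subst1_mul_apply]
  refine Finset.sum_congr rfl fun t ht => ?_
  have hdit : (d - Finsupp.single i t) i = d i - t := by
    rw [Finsupp.tsub_apply, Finsupp.single_eq_same]
  have : PhiM phi (Dx psiP rk i m) (d - Finsupp.single i t)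
      = ∑ l ∈ range (d i - t + 1), phi (dStep psiP rk l
          (m (d - Finsupp.single i t - Finsupp.single i l))) := by
    show phi (Dx psiP rk i m (d - Finsupp.single i t)) = _
    rw [Dx, map_sum, hdit]
  rw [this, Finset.mul_sum]

lemma Dx_Ux (psi psiP : P → P → K) (rk : P → ℕ) (F : ℕ → ℕ → K)
    (hcomm : ∀ (a b : ℕ) (c : P →₀ K),
      dStep psiP rk b (uStep psi rk a c) =
        ∑ x ∈ Finset.range (a + 1), ∑ y ∈ Finset.range (b + 1),
          F x y • uStep psi rk (a - x) (dStep psiP rk (b - y) c))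
    {i j : Fin n} (hij : i ≠ j) (m : (Fin n →₀ ℕ) → (P →₀ K)) :
    Dx psiP rk j (Ux psi rk i m) = mulS (subst2 F i j) (Ux psi rk i (Dx psiP rk j m)) := by
  funext d
  have hdi : ∀ l : ℕ, (d - Finsupp.single j l) i = d i := by
    intro l
    rw [Finsupp.tsub_apply, Finsupp.single_eq_of_ne' (Ne.symm hij), Nat.sub_zero]
  calc (Dx psiP rk j (Ux psi rk i m)) d
      = ∑ l ∈ range (d j + 1), ∑ k ∈ range (d i + 1),
          ∑ a ∈ range (k + 1), ∑ b ∈ range (l + 1),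
            F a b • uStep psi rk (k - a) (dStep psiP rk (l - b)
              (m (d - Finsupp.single j l - Finsupp.single i k))) := by
        rw [Dx]
        refine Finset.sum_congr rfl fun l _ => ?_
        rw [Ux, hdi l, dStep_sum]
        refine Finset.sum_congr rfl fun k _ => ?_
        rw [hcomm]
    _ = ∑ l ∈ range (d j + 1), ∑ a ∈ range (d i + 1), ∑ c ∈ range (d i - a + 1),
          ∑ b ∈ range (l + 1),
            F a b • uStep psi rk c (dStep psiP rk (l - b)
              (m (d - Finsupp.single j l - Finsupp.single i a - Finsupp.single i c))) := by
        refine Finset.sum_congr rfl fun l _ => ?_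
        have htri := sum_range_triangle (d i) (fun a c => ∑ b ∈ range (l + 1),
          F a b • uStep psi rk c (dStep psiP rk (l - b)
            (m (d - Finsupp.single j l - Finsupp.single i a - Finsupp.single i c))))
        beta_reduce at htri
        rw [← htri]
        refine Finset.sum_congr rfl fun k hk => Finset.sum_congr rfl fun a ha => ?_
        simp only [Finset.mem_range] at hk ha
        refine Finset.sum_congr rfl fun b _ => ?_
        have hmono : d - Finsupp.single j l - Finsupp.single i k
            = d - Finsupp.single j l - Finsupp.single i a - Finsupp.single i (k - a) := by
          rw [← sub_single_split]
          congr 2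
          omega
        rw [hmono]
    _ = ∑ l ∈ range (d j + 1), ∑ b ∈ range (l + 1), ∑ a ∈ range (d i + 1),
          ∑ c ∈ range (d i - a + 1),
            F a b • uStep psi rk c (dStep psiP rk (l - b)
              (m (d - Finsupp.single j l - Finsupp.single i a - Finsupp.single i c))) := by
        refine Finset.sum_congr rfl fun l _ => ?_
        exact (Finset.sum_congr rfl fun a _ => Finset.sum_comm).trans Finset.sum_comm
    _ = ∑ b ∈ range (d j + 1), ∑ e ∈ range (d j - b + 1), ∑ a ∈ range (d i + 1),
          ∑ c ∈ range (d i - a + 1),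
            F a b • uStep psi rk c (dStep psiP rk e
              (m (d - Finsupp.single j b - Finsupp.single j e
                - Finsupp.single i a - Finsupp.single i c))) := by
        have htri2 := sum_range_triangle (d j) (fun b e => ∑ a ∈ range (d i + 1),
          ∑ c ∈ range (d i - a + 1),
            F a b • uStep psi rk c (dStep psiP rk e
              (m (d - Finsupp.single j b - Finsupp.single j e
                - Finsupp.single i a - Finsupp.single i c))))
        beta_reduce at htri2
        rw [← htri2]
        refine Finset.sum_congr rfl fun l hl => Finset.sum_congr rfl fun b hb => ?_
        simp only [Finset.mem_range] at hl hb
        refine Finset.sum_congr rfl fun a _ => Finset.sum_congr rfl fun c _ => ?_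
        have hmono : d - Finsupp.single j l - Finsupp.single i a - Finsupp.single i c
            = d - Finsupp.single j b - Finsupp.single j (l - b)
              - Finsupp.single i a - Finsupp.single i c := by
          have : d - Finsupp.single j l
              = d - Finsupp.single j b - Finsupp.single j (l - b) := by
            rw [← sub_single_split]
            congr 2
            omega
          rw [this]
        rw [hmono]
    _ = ∑ a ∈ range (d i + 1), ∑ b ∈ range (d j + 1), ∑ c ∈ range (d i - a + 1),
          ∑ e ∈ range (d j - b + 1),
            F a b • uStep psi rk c (dStep psiP rk e
              (m (d - Finsupp.single j b - Finsupp.single j e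
                - Finsupp.single i a - Finsupp.single i c))) := by
        rw [quad_comm]
    _ = mulS (subst2 F i j) (Ux psi rk i (Dx psiP rk j m)) d := by
        rw [mulS_subst2_apply F hij]
        refine Finset.sum_congr rfl fun a ha => Finset.sum_congr rfl fun b hb => ?_
        have h1 : (d - Finsupp.single i a - Finsupp.single j b) i = d i - a := by
          rw [Finsupp.tsub_apply, Finsupp.tsub_apply, Finsupp.single_eq_same,
            Finsupp.single_eq_of_ne' (Ne.symm hij), Nat.sub_zero]
        have h2 : ∀ c : ℕ, (d - Finsupp.single i a - Finsupp.single j b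
            - Finsupp.single i c) j = d j - b := by
          intro c
          rw [Finsupp.tsub_apply, Finsupp.tsub_apply, Finsupp.tsub_apply,
            Finsupp.single_eq_of_ne' hij, Finsupp.single_eq_same,
            Finsupp.single_eq_of_ne' hij, Nat.sub_zero, Nat.sub_zero]
        rw [Ux, h1, Finset.smul_sum]
        refine Finset.sum_congr rfl fun c _ => ?_
        rw [Dx, h2 c, uStep_sum, Finset.smul_sum]
        refine Finset.sum_congr rfl fun e _ => ?_
        have hmono : d - Finsupp.single j b - Finsupp.single j e
            - Finsupp.single i a - Finsupp.single i c
            = d - Finsupp.single i a - Finsupp.single j b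
              - Finsupp.single i c - Finsupp.single j e := by
          ext x
          simp only [Finsupp.tsub_apply, Finsupp.single_apply]
          split_ifs <;> omega
        rw [hmono]


/-- Apply `U`-operators along a list (head outermost = applied last). -/
def applyU (psi : P → P → K) (rk : P → ℕ) :
    List (Fin n) → ((Fin n →₀ ℕ) → (P →₀ K)) → ((Fin n →₀ ℕ) → (P →₀ K))
  | [], m => m
  | (i :: L), m => Ux psi rk i (applyU psi rk L m)

/-- Apply `D`-operators along a list (head innermost = applied first). -/
def applyD (psiP : P → P → K) (rk : P → ℕ) :
    List (Fin n) → ((Fin n →₀ ℕ) → (P →₀ K)) → ((Fin n →₀ ℕ) → (P →₀ K))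
  | [], m => m
  | (i :: L), m => applyD psiP rk L (Dx psiP rk i m)

/-- The product of commutation factors along a list. -/
def pairProd (F : ℕ → ℕ → K) : List (Fin n) → MvPowerSeries (Fin n) K
  | [] => 1
  | (i :: L) => (L.map (fun j => subst2 F j i)).prod * pairProd F L

lemma pull_through (psi psiP : P → P → K) (rk : P → ℕ) (F : ℕ → ℕ → K)
    (hcomm : ∀ (a b : ℕ) (c : P →₀ K),
      dStep psiP rk b (uStep psi rk a c) =
        ∑ x ∈ Finset.range (a + 1), ∑ y ∈ Finset.range (b + 1),
          F x y • uStep psi rk (a - x) (dStep psiP rk (b - y) c)) :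
    ∀ (L : List (Fin n)) (i : Fin n), (∀ j ∈ L, j ≠ i) →
      ∀ m : (Fin n →₀ ℕ) → (P →₀ K),
      Dx psiP rk i (applyU psi rk L m)
        = mulS ((L.map (fun j => subst2 F j i)).prod)
            (applyU psi rk L (Dx psiP rk i m))
  | [], i, _, m => by
    rw [applyU, List.map_nil, List.prod_nil, mulS_one, applyU]
  | (j :: L), i, h, m => by
    have hji : j ≠ i := h j (List.mem_cons_self)
    rw [applyU, Dx_Ux psi psiP rk F hcomm hji,
      pull_through psi psiP rk F hcomm L i (fun a ha => h a (List.mem_cons_of_mem j ha)) m,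
      Ux_mulS, mulS_mulS, List.map_cons, List.prod_cons, applyU]

lemma main_list (psi psiP : P → P → K) (rk : P → ℕ) (F : ℕ → ℕ → K) (G : ℕ → K)
    (phi : (P →₀ K) →ₗ[K] K)
    (hcomm : ∀ (a b : ℕ) (c : P →₀ K),
      dStep psiP rk b (uStep psi rk a c) =
        ∑ x ∈ Finset.range (a + 1), ∑ y ∈ Finset.range (b + 1),
          F x y • uStep psi rk (a - x) (dStep psiP rk (b - y) c))
    (hproj : ∀ (k : ℕ) (c : P →₀ K),
      phi (uStep psi rk k c) =
        ∑ t ∈ Finset.range (k + 1), G t * phi (dStep psiP rk (k - t) c)) :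
    ∀ L : List (Fin n), L.Pairwise (· ≠ ·) →
      ∀ m : (Fin n →₀ ℕ) → (P →₀ K),
      PhiM phi (applyU psi rk L m)
        = (L.map (subst1 G)).prod * pairProd F L * PhiM phi (applyD psiP rk L m)
  | [], _, m => by
    rw [applyU, applyD, List.map_nil, List.prod_nil, pairProd, one_mul, one_mul]
  | (i :: L), hp, m => by
    obtain ⟨hhead, htail⟩ := List.pairwise_cons.1 hp
    rw [applyU, PhiM_Ux psi psiP rk G phi hproj,
      pull_through psi psiP rk F hcomm L i (fun j hj => (hhead j hj).symm) m,
      PhiM_mulS,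
      main_list psi psiP rk F G phi hcomm hproj L htail (Dx psiP rk i m),
      applyD, List.map_cons, List.prod_cons, pairProd]
    ring


/-- The descending list `[k-1, ..., 1, 0]` of elements of `Fin n`. -/
def descList (n k : ℕ) : List (Fin n) := ((List.finRange n).take k).reverse

lemma descList_zero : descList n 0 = [] := rfl

lemma descList_succ (k : ℕ) (hk : k < n) :
    descList n (k + 1) = (⟨k, hk⟩ : Fin n) :: descList n k := by
  rw [descList, List.take_succ, descList]
  have : (List.finRange n)[k]? = some ⟨k, hk⟩ := by
    rw [List.getElem?_eq_getElem (by simpa using hk)]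
    simp
  rw [this]
  simp

lemma mem_descList (k : ℕ) (hk : k ≤ n) (j : Fin n) :
    j ∈ descList n k ↔ j.val < k := by
  induction k with
  | zero => simp [descList_zero]
  | succ k ih =>
    rw [descList_succ k (by omega), List.mem_cons, ih (by omega)]
    constructor
    · rintro (rfl | h)
      · exact Nat.lt_succ_self k
      · omega
    · intro h
      by_cases hjk : j.val = k
      · exact Or.inl (by ext; simpa using hjk)
      · exact Or.inr (by omega)

lemma sorted_descList (k : ℕ) : (descList n k).Pairwise (· > ·) := by
  rw [descList]
  rw [List.pairwise_reverse]
  exact List.Pairwise.sublist (List.take_sublist _ _) (List.pairwise_lt_finRange n)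

lemma descList_full : descList n n = (List.finRange n).reverse := by
  rw [descList, List.take_of_length_le (by simp)]

lemma pairProd_sorted (F : ℕ → ℕ → K) :
    ∀ L : List (Fin n), L.Pairwise (· > ·) →
      pairProd F L = ∏ p ∈ Finset.univ.filter
        (fun p : Fin n × Fin n => p.1 < p.2 ∧ p.1 ∈ L ∧ p.2 ∈ L),
          subst2 F p.1 p.2
  | [], _ => by
    rw [pairProd]
    rw [Finset.prod_congr (show Finset.univ.filter
      (fun p : Fin n × Fin n => p.1 < p.2 ∧ p.1 ∈ ([] : List (Fin n)) ∧ p.2 ∈ ([] : List (Fin n)))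
      = ∅ by ext p; simp) (fun _ _ => rfl), Finset.prod_empty]
  | (i :: L), hs => by
    obtain ⟨hlt, htail⟩ := List.pairwise_cons.1 hs
    have hnd : L.Nodup := htail.nodup
    classical
    have hsplit : Finset.univ.filter
        (fun p : Fin n × Fin n => p.1 < p.2 ∧ p.1 ∈ i :: L ∧ p.2 ∈ i :: L)
        = L.toFinset.image (fun j => (j, i))
          ∪ Finset.univ.filter
            (fun p : Fin n × Fin n => p.1 < p.2 ∧ p.1 ∈ L ∧ p.2 ∈ L) := by
      ext ⟨p1, p2⟩
      simp only [Finset.mem_filter, Finset.mem_univ, true_and, Finset.mem_union,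
        Finset.mem_image, List.mem_toFinset, List.mem_cons, Prod.mk.injEq]
      constructor
      · rintro ⟨hplt, (rfl | h1), (h2 | h2)⟩
        · exact absurd (h2 ▸ hplt) (lt_irrefl _)
        · exact absurd (hplt.trans (hlt p2 h2)) (lt_irrefl _)
        · exact Or.inl ⟨p1, h1, rfl, h2.symm⟩
        · exact Or.inr ⟨hplt, h1, h2⟩
      · rintro (⟨j, hj, rfl, rfl⟩ | ⟨hplt, h1, h2⟩)
        · exact ⟨hlt j hj, Or.inr hj, Or.inl rfl⟩
        · exact ⟨hplt, Or.inr h1, Or.inr h2⟩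
    have hdisj : Disjoint (L.toFinset.image (fun j => (j, i)))
        (Finset.univ.filter
          (fun p : Fin n × Fin n => p.1 < p.2 ∧ p.1 ∈ L ∧ p.2 ∈ L)) := by
      refine Finset.disjoint_left.2 ?_
      rintro ⟨p1, p2⟩ hA hB
      simp only [Finset.mem_image, List.mem_toFinset, Prod.mk.injEq] at hA
      simp only [Finset.mem_filter] at hB
      obtain ⟨j, hj, rfl, rfl⟩ := hA
      exact absurd (hlt _ hB.2.2.2) (lt_irrefl _)
    rw [pairProd, hsplit, Finset.prod_union hdisj, Finset.prod_image (by
      rintro a _ b _ hab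
      simpa using (Prod.mk.injEq _ _ _ _ ▸ hab).1)]
    rw [pairProd_sorted F L htail]
    congr 1
    rw [← List.prod_toFinset _ hnd]


/-- Degree sequence of a monomial, as a function on `ℕ`. -/
def dval {n : ℕ} (d : Fin n →₀ ℕ) (t : ℕ) : ℕ := if h : t < n then d ⟨t, h⟩ else 0

lemma dval_sub_single {d : Fin n →₀ ℕ} {i : Fin n} {s t : ℕ} (h : t ≠ i.val) :
    dval (d - Finsupp.single i s) t = dval d t := by
  rw [dval, dval]
  split_ifs with hlt
  · rw [Finsupp.tsub_apply, Finsupp.single_eq_of_ne' (fun he => h (by rw [he]))]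
    omega
  · rfl

lemma applyU_desc (psi : P → P → K) (rk : P → ℕ) (lam : P) :
    ∀ k, k ≤ n → ∀ d : Fin n →₀ ℕ,
      applyU psi rk (descList n k) (deltaM lam) d
        = if ∀ j : Fin n, k ≤ j.val → d j = 0
          then iterStep (fun t c => uStep psi rk (dval d t) c) (Finsupp.single lam 1) k
          else 0 := by
  intro k
  induction k with
  | zero =>
    intro _ d
    rw [descList_zero]
    show deltaM lam d = _
    rw [deltaM]
    by_cases hd : d = 0
    · rw [if_pos hd, if_pos (fun j _ => by rw [hd]; rfl)]
      rfl
    · rw [if_neg hd, if_neg (fun hcond => hd (by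
        ext j
        exact hcond j (Nat.zero_le _)))]
  | succ k ih =>
    intro hk1 d
    have hk : k < n := hk1
    rw [descList_succ k hk]
    show Ux psi rk ⟨k, hk⟩ (applyU psi rk (descList n k) (deltaM lam)) d = _
    set i : Fin n := ⟨k, hk⟩ with hidef
    rw [Ux]
    rw [Finset.sum_eq_single_of_mem (d i) (Finset.mem_range.2 (Nat.lt_succ_self _)) ?van]
    case van =>
      intro t ht hne
      rw [ih (by omega) (d - Finsupp.single i t), if_neg, uStep_zero]
      intro hcond
      have hzi := hcond i (le_refl k)
      rw [Finsupp.tsub_apply, Finsupp.single_eq_same] at hzi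
      simp only [Finset.mem_range] at ht
      omega
    rw [ih (by omega) (d - Finsupp.single i (d i))]
    have hcond_iff : (∀ j : Fin n, k ≤ j.val → (d - Finsupp.single i (d i)) j = 0)
        ↔ (∀ j : Fin n, k + 1 ≤ j.val → d j = 0) := by
      constructor
      · intro h j hj
        have := h j (by omega)
        rw [Finsupp.tsub_apply,
          Finsupp.single_eq_of_ne' (fun he => by
            have : j.val = k := by rw [← he]
            omega)] at this
        omega
      · intro h j hj
        by_cases hji : j = i
        · rw [hji, Finsupp.tsub_apply, Finsupp.single_eq_same]
          omega
        · rw [Finsupp.tsub_apply, Finsupp.single_eq_of_ne' (fun he => hji he.symm)]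
          have hjk : j.val ≠ k := fun hv => hji (by ext; exact hv)
          have := h j (by omega)
          omega
    by_cases hc : ∀ j : Fin n, k + 1 ≤ j.val → d j = 0
    · rw [if_pos (hcond_iff.2 hc), if_pos hc]
      show uStep psi rk (d i) _ = uStep psi rk (dval d k) _
      have h1 : dval d k = d i := by
        rw [dval, dif_pos hk]
      have h2 : iterStep (fun t c => uStep psi rk (dval (d - Finsupp.single i (d i)) t) c)
          (Finsupp.single lam 1) k
          = iterStep (fun t c => uStep psi rk (dval d t) c) (Finsupp.single lam 1) k := by
        refine iterStep_congr _ _ _ k fun t ht => ?_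
        funext c
        rw [dval_sub_single (show t ≠ i.val by simp only [hidef]; omega)]
      rw [h1, h2]
    · rw [if_neg (fun h => hc (hcond_iff.1 h)), if_neg hc, uStep_zero]

/-- The iterated application of down operators `D_{x_{n-1}}, ..., D_{x_{n-r}}`. -/
def DxIter (psiP : P → P → K) (rk : P → ℕ) (lam : P) :
    ℕ → ((Fin n →₀ ℕ) → (P →₀ K))
  | 0 => deltaM lam
  | (r + 1) =>
    if h : n - 1 - r < n then Dx psiP rk ⟨n - 1 - r, h⟩ (DxIter psiP rk lam r)
    else DxIter psiP rk lam r

lemma applyD_descList (psiP : P → P → K) (rk : P → ℕ) (lam : P) :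
    ∀ k, k ≤ n →
      applyD psiP rk (descList n k) (DxIter psiP rk lam (n - k)) = DxIter psiP rk lam n := by
  intro k
  induction k with
  | zero =>
    intro _
    rw [descList_zero, Nat.sub_zero]
    rfl
  | succ k ih =>
    intro hk1
    have hk : k < n := hk1
    rw [descList_succ k hk]
    show applyD psiP rk (descList n k) (Dx psiP rk ⟨k, hk⟩ (DxIter psiP rk lam (n - (k + 1))))
      = _
    have hs : n - k = (n - (k + 1)) + 1 := by omega
    have hstep : Dx psiP rk ⟨k, hk⟩ (DxIter psiP rk lam (n - (k + 1)))
        = DxIter psiP rk lam (n - k) := by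
      rw [hs]
      show _ = DxIter psiP rk lam ((n - (k + 1)) + 1)
      rw [DxIter, dif_pos (show n - 1 - (n - (k + 1)) < n by omega)]
      have hidx : (⟨n - 1 - (n - (k + 1)), by omega⟩ : Fin n) = ⟨k, hk⟩ := by
        ext
        simp only []
        omega
      rw [hidx]
    rw [hstep]
    exact ih (by omega)

lemma DxIter_desc (psiP : P → P → K) (rk : P → ℕ) (lam : P) :
    ∀ r, r ≤ n → ∀ d : Fin n →₀ ℕ,
      DxIter psiP rk lam r d
        = if ∀ j : Fin n, j.val < n - r → d j = 0
          then iterStep (fun t c => dStep psiP rk (dval d (n - 1 - t)) c)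
            (Finsupp.single lam 1) r
          else 0 := by
  intro r
  induction r with
  | zero =>
    intro _ d
    show deltaM lam d = _
    rw [deltaM]
    by_cases hd : d = 0
    · rw [if_pos hd, if_pos (fun j _ => by rw [hd]; rfl)]
      rfl
    · rw [if_neg hd, if_neg (fun hcond => hd (by
        ext j
        exact hcond j j.isLt))]
  | succ r ih =>
    intro hr1 d
    have hr : r < n := hr1
    have hlt : n - 1 - r < n := by omega
    rw [DxIter, dif_pos hlt]
    set i : Fin n := ⟨n - 1 - r, hlt⟩ with hidef
    rw [Dx]
    rw [Finset.sum_eq_single_of_mem (d i) (Finset.mem_range.2 (Nat.lt_succ_self _)) ?van]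
    case van =>
      intro t ht hne
      rw [ih (by omega) (d - Finsupp.single i t), if_neg, dStep_zero]
      intro hcond
      have hzi := hcond i (by simp only [hidef]; omega)
      rw [Finsupp.tsub_apply, Finsupp.single_eq_same] at hzi
      simp only [Finset.mem_range] at ht
      omega
    rw [ih (by omega) (d - Finsupp.single i (d i))]
    have hcond_iff : (∀ j : Fin n, j.val < n - r → (d - Finsupp.single i (d i)) j = 0)
        ↔ (∀ j : Fin n, j.val < n - (r + 1) → d j = 0) := by
      constructor
      · intro h j hj
        have := h j (by omega)
        rw [Finsupp.tsub_apply,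
          Finsupp.single_eq_of_ne' (fun he => by
            have : j.val = n - 1 - r := by rw [← he]
            omega)] at this
        omega
      · intro h j hj
        by_cases hji : j = i
        · rw [hji, Finsupp.tsub_apply, Finsupp.single_eq_same]
          omega
        · rw [Finsupp.tsub_apply, Finsupp.single_eq_of_ne' (fun he => hji he.symm)]
          have hjk : j.val ≠ n - 1 - r := fun hv => hji (by ext; exact hv)
          have := h j (by omega)
          omega
    by_cases hc : ∀ j : Fin n, j.val < n - (r + 1) → d j = 0
    · rw [if_pos (hcond_iff.2 hc), if_pos hc]
      show dStep psiP rk (d i) _ = dStep psiP rk (dval d (n - 1 - r)) _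
      have h1 : dval d (n - 1 - r) = d i := by
        rw [dval, dif_pos hlt]
      have h2 : iterStep (fun t c => dStep psiP rk
            (dval (d - Finsupp.single i (d i)) (n - 1 - t)) c) (Finsupp.single lam 1) r
          = iterStep (fun t c => dStep psiP rk (dval d (n - 1 - t)) c)
            (Finsupp.single lam 1) r := by
        refine iterStep_congr _ _ _ r fun t ht => ?_
        funext c
        rw [dval_sub_single (show n - 1 - t ≠ i.val by simp only [hidef]; omega)]
      rw [h1, h2]
    · rw [if_neg (fun h => hc (hcond_iff.1 h)), if_neg hc, dStep_zero]


lemma prod_if_all {ι : Type*} [Fintype ι] (p : ι → Prop) [DecidablePred p]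
    [Decidable (∀ i, p i)] (f : ι → K) :
    (∏ i : ι, if p i then f i else 0) = if (∀ i, p i) then ∏ i : ι, f i else 0 := by
  classical
  by_cases h : ∀ i, p i
  · rw [if_pos h]
    exact Finset.prod_congr rfl fun i _ => if_pos (h i)
  · rw [if_neg h]
    obtain ⟨i, hi⟩ := not_forall.1 h
    exact Finset.prod_eq_zero (Finset.mem_univ i) (if_neg hi)

lemma sCoeff_eq_chainSum (psi : P → P → K) (rk : P → ℕ) (lam nu : P) (d : Fin n →₀ ℕ) :
    sCoeff psi rk n lam nu d
      = ∑ᶠ T ∈ LWAux.chainsTo lam n nu,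
          LWAux.cwt (fun t a b => if rk b = rk a + dval d t then psi b a else 0) n T := by
  classical
  rw [sCoeff, finsum_mem_def, finsum_mem_def]
  refine finsum_congr fun T => ?_
  by_cases hT : T 0 = lam ∧ T (Fin.last n) = nu
  · have hmem : T ∈ LWAux.chainsTo lam n nu := hT
    rw [Set.indicator_of_mem hmem]
    have hcwt : LWAux.cwt (fun t a b => if rk b = rk a + dval d t then psi b a else 0) n T
        = if (∀ i : Fin n, rk (T i.succ) = rk (T i.castSucc) + d i)
          then ∏ i : Fin n, psi (T i.succ) (T i.castSucc) else 0 := by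
      rw [LWAux.cwt]
      rw [Finset.prod_congr rfl (fun i (_ : i ∈ Finset.univ) => show
        (if rk (T i.succ) = rk (T i.castSucc) + dval d i.val then psi (T i.succ) (T i.castSucc)
          else 0)
        = if rk (T i.succ) = rk (T i.castSucc) + d i then psi (T i.succ) (T i.castSucc) else 0 by
          have : dval d i.val = d i := by
            rw [dval, dif_pos i.isLt]
          rw [this])]
      exact prod_if_all _ _
    rw [hcwt]
    by_cases hall : ∀ i : Fin n, rk (T i.succ) = rk (T i.castSucc) + d i
    · rw [if_pos hall, Set.indicator_of_mem (by exact ⟨hT.1, hT.2, hall⟩)]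
    · rw [if_neg hall, Set.indicator_of_notMem (by
        intro hmem2
        simp only [Set.mem_setOf_eq] at hmem2
        exact hall hmem2.2.2)]
  · rw [Set.indicator_of_notMem (s := {T : Fin (n + 1) → P | T 0 = lam ∧
        T (Fin.last n) = nu ∧ ∀ i : Fin n, rk (T i.succ) = rk (T i.castSucc) + d i}) (by
        intro hmem
        simp only [Set.mem_setOf_eq] at hmem
        exact hT ⟨hmem.1, hmem.2.1⟩),
      Set.indicator_of_notMem (s := LWAux.chainsTo _ _ _) (fun hmem => hT hmem)]

lemma sPerpCoeff_eq_chainSum (psiP : P → P → K) (rk : P → ℕ) (lam mu : P) (d : Fin n →₀ ℕ) :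
    sPerpCoeff psiP rk n lam mu d
      = ∑ᶠ T ∈ LWAux.chainsTo lam n mu,
          LWAux.cwt (fun t a b => if rk a = rk b + dval d (n - 1 - t) then psiP a b else 0)
            n T := by
  classical
  rw [sPerpCoeff, finsum_mem_def, finsum_mem_def]
  refine finsum_congr fun T => ?_
  by_cases hT : T 0 = lam ∧ T (Fin.last n) = mu
  · have hmem : T ∈ LWAux.chainsTo lam n mu := hT
    rw [Set.indicator_of_mem hmem]
    have hcwt : LWAux.cwt (fun t a b => if rk a = rk b + dval d (n - 1 - t) then psiP a b else 0)
          n T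
        = if (∀ i : Fin n, rk (T i.castSucc) = rk (T i.succ) + d i.rev)
          then ∏ i : Fin n, psiP (T i.castSucc) (T i.succ) else 0 := by
      rw [LWAux.cwt]
      rw [Finset.prod_congr rfl (fun i (_ : i ∈ Finset.univ) => show
        (if rk (T i.castSucc) = rk (T i.succ) + dval d (n - 1 - i.val)
          then psiP (T i.castSucc) (T i.succ) else 0)
        = if rk (T i.castSucc) = rk (T i.succ) + d i.rev
          then psiP (T i.castSucc) (T i.succ) else 0 by
          have h1 : dval d (n - 1 - i.val) = d i.rev := by
            rw [dval, dif_pos (show n - 1 - i.val < n by omega)]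
            congr 1
            ext
            simp only [Fin.val_rev]
            omega
          rw [h1])]
      exact prod_if_all _ _
    rw [hcwt]
    by_cases hall : ∀ i : Fin n, rk (T i.castSucc) = rk (T i.succ) + d i.rev
    · rw [if_pos hall, Set.indicator_of_mem (by exact ⟨hT.1, hT.2, hall⟩)]
    · rw [if_neg hall, Set.indicator_of_notMem (by
        intro hmem2
        simp only [Set.mem_setOf_eq] at hmem2
        exact hall hmem2.2.2)]
  · rw [Set.indicator_of_notMem (s := {T : Fin (n + 1) → P | T 0 = lam ∧
        T (Fin.last n) = mu ∧ ∀ i : Fin n, rk (T i.castSucc) = rk (T i.succ) + d i.rev}) (by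
        intro hmem
        simp only [Set.mem_setOf_eq] at hmem
        exact hT ⟨hmem.1, hmem.2.1⟩),
      Set.indicator_of_notMem (s := LWAux.chainsTo _ _ _) (fun hmem => hT hmem)]

lemma phiUp_eq (psi : P → P → K) (rk : P → ℕ)
    (hfinU : ∀ (lam : P) (k : ℕ), {ν : P | psi ν lam ≠ 0 ∧ rk ν = rk lam + k}.Finite)
    (phi : (P →₀ K) →ₗ[K] K) (lam : P) :
    phiUpSum psi rk phi n lam = PhiM phi (applyU psi rk (descList n n) (deltaM lam)) := by
  funext d
  show (∑ᶠ ν : P, phi (Finsupp.single ν 1) * sCoeff psi rk n lam ν d)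
    = phi (applyU psi rk (descList n n) (deltaM lam) d)
  rw [applyU_desc psi rk lam n (le_refl n) d,
    if_pos (fun j hj => absurd hj (by have := j.isLt; omega)),
    phi_apply_finsum]
  refine finsum_congr fun ν => ?_
  congr 1
  rw [sCoeff_eq_chainSum]
  have hW : ∀ t a, {b : P | (if rk b = rk a + dval d t then psi b a else 0) ≠ 0}.Finite := by
    intro t a
    refine (hfinU a (dval d t)).subset fun b hb => ?_
    simp only [Set.mem_setOf_eq] at hb ⊢
    by_cases hc : rk b = rk a + dval d t
    · rw [if_pos hc] at hb
      exact ⟨hb, hc⟩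
    · rw [if_neg hc] at hb
      exact absurd rfl hb
  rw [iterStep_eq_chainSum
    (fun t a b => if rk b = rk a + dval d t then psi b a else 0) hW
    (fun t c => uStep psi rk (dval d t) c)
    (fun t c b => uStep_apply psi rk hfinU (dval d t) c b) lam n ν]

lemma phiDown_eq (psiP : P → P → K) (rk : P → ℕ)
    (hfinD : ∀ (lam : P) (k : ℕ), {mu : P | psiP lam mu ≠ 0 ∧ rk lam = rk mu + k}.Finite)
    (phi : (P →₀ K) →ₗ[K] K) (lam : P) :
    phiDownSum psiP rk phi n lam = PhiM phi (DxIter psiP rk lam n) := by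
  funext d
  show (∑ᶠ mu : P, phi (Finsupp.single mu 1) * sPerpCoeff psiP rk n lam mu d)
    = phi (DxIter psiP rk lam n d)
  rw [DxIter_desc psiP rk lam n (le_refl n) d,
    if_pos (fun j hj => absurd hj (by omega)),
    phi_apply_finsum]
  refine finsum_congr fun mu => ?_
  congr 1
  rw [sPerpCoeff_eq_chainSum]
  have hW : ∀ t a, {b : P | (if rk a = rk b + dval d (n - 1 - t) then psiP a b else 0) ≠ 0}.Finite := by
    intro t a
    refine (hfinD a (dval d (n - 1 - t))).subset fun b hb => ?_
    simp only [Set.mem_setOf_eq] at hb ⊢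
    by_cases hc : rk a = rk b + dval d (n - 1 - t)
    · rw [if_pos hc] at hb
      exact ⟨hb, hc⟩
    · rw [if_neg hc] at hb
      exact absurd rfl hb
  rw [iterStep_eq_chainSum
    (fun t a b => if rk a = rk b + dval d (n - 1 - t) then psiP a b else 0) hW
    (fun t c => dStep psiP rk (dval d (n - 1 - t)) c)
    (fun t c b => dStep_apply psiP rk hfinD (dval d (n - 1 - t)) c b) lam n mu]

end PSLayer

/-- General framework: let `P` be a ranked poset with up and down operators
given by weight functions `ψ, ψ^⊥` (supported on comparable pairs, with
finitely many terms in each degree).  Assume the commutation relation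
`D_y U_x = f(x,y) U_x D_y` (stated coefficientwise, `F` being the coefficients
of `f`) and a projection identity `φ ∘ U_x = g(x) · φ ∘ D_x` for a linear
functional `φ` (applied coefficientwise, `G` being the coefficients of `g`).
Then for every `lam` in `P`:
`Σ_ν φ(ν) s_{ν/lam}(x₁,…,xₙ) = ∏_i g(x_i) · ∏_{i<j} f(x_i,x_j) · Σ_μ φ(μ) s^⊥_{lam/μ}(x₁,…,xₙ)`. -/
theorem general_littlewood (psi psiP : P → P → K) (rk : P → ℕ)
    (htri : ∀ ν lam : P, psi ν lam ≠ 0 → lam ≤ ν)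
    (htriP : ∀ lam mu : P, psiP lam mu ≠ 0 → mu ≤ lam)
    (hrk : ∀ a b : P, a ≤ b → rk a ≤ rk b)
    (hfinU : ∀ (lam : P) (k : ℕ), {ν : P | psi ν lam ≠ 0 ∧ rk ν = rk lam + k}.Finite)
    (hfinD : ∀ (lam : P) (k : ℕ), {mu : P | psiP lam mu ≠ 0 ∧ rk lam = rk mu + k}.Finite)
    (F : ℕ → ℕ → K) (G : ℕ → K) (phi : (P →₀ K) →ₗ[K] K)
    (hcomm : ∀ (a b : ℕ) (c : P →₀ K),
      dStep psiP rk b (uStep psi rk a c) =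
        ∑ i ∈ Finset.range (a + 1), ∑ j ∈ Finset.range (b + 1),
          F i j • uStep psi rk (a - i) (dStep psiP rk (b - j) c))
    (hproj : ∀ (k : ℕ) (c : P →₀ K),
      phi (uStep psi rk k c) =
        ∑ i ∈ Finset.range (k + 1), G i * phi (dStep psiP rk (k - i) c))
    (n : ℕ) (lam : P) :
    phiUpSum psi rk phi n lam =
      (∏ i : Fin n, subst1 G i) *
      (∏ p ∈ Finset.univ.filter (fun p : Fin n × Fin n => p.1 < p.2),
        subst2 F p.1 p.2) *
      phiDownSum psiP rk phi n lam := by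
  classical
  have hpair : (descList n n).Pairwise (· ≠ ·) :=
    List.Pairwise.imp (fun h => ne_of_gt h) (sorted_descList n)
  have hmain := main_list psi psiP rk F G phi hcomm hproj (descList n n) hpair (deltaM lam)
  have hUP := phiUp_eq (n := n) psi rk hfinU phi lam
  have hDN : phiDownSum psiP rk phi n lam
      = PhiM phi (applyD psiP rk (descList n n) (deltaM lam)) := by
    rw [phiDown_eq (n := n) psiP rk hfinD phi lam]
    have h0 := applyD_descList psiP rk lam n (le_refl n)
    rw [Nat.sub_self] at h0
    rw [← h0]
    rfl
  have hG : ((descList n n).map (subst1 G)).prod = ∏ i : Fin n, subst1 G i := by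
    rw [descList_full, List.map_reverse, List.prod_reverse, ← Fin.prod_univ_def]
  have hF : pairProd F (descList n n)
      = ∏ p ∈ Finset.univ.filter (fun p : Fin n × Fin n => p.1 < p.2),
          subst2 F p.1 p.2 := by
    rw [pairProd_sorted F _ (sorted_descList n)]
    refine Finset.prod_congr ?_ fun _ _ => rfl
    ext p
    simp only [Finset.mem_filter, Finset.mem_univ, true_and]
    constructor
    · rintro ⟨h, -, -⟩
      exact h
    · intro h
      exact ⟨h, (mem_descList n (le_refl n) p.1).2 p.1.isLt,
        (mem_descList n (le_refl n) p.2).2 p.2.isLt⟩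
  rw [hUP, hmain, hG, hF, ← hDN]

end
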